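/- For d ≥ 3 and n ≥ 3d-3, one has C(n,d) - C(n,d-2) ≥ C(n,d-1) - C(n,d-3), i.e., the Hilbert function of F[x_1,...,x_n]/(x_1^2,...,x_n^2,(x_1+...+x_n)^2) is at least as large in degree d as in degree d-1. -/
import Mathlib


theorem hilbert_function_increasing (d n : ℕ) (hd : 3 ≤ d) (hn : 3 * d - 3 ≤ n) :
    (n.choose (d - 1) : ℤ) - n.choose (d - 3) ≤ (n.choose d : ℤ) - n.choose (d - 2) := by
  obtain ⟨k, rfl⟩ : ∃ k, d = k + 3 := ⟨d - 3, by omega⟩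
  have hn' : 3 * k + 6 ≤ n := by omega
  have hkn : k ≤ n := by omega
  simp only [show k + 3 - 1 = k + 2 from rfl, show k + 3 - 2 = k + 1 from rfl,
    show k + 3 - 3 = k from rfl]
  set a : ℤ := (n.choose k : ℤ) with ha_def
  set b : ℤ := (n.choose (k + 1) : ℤ) with hb_def
  set c : ℤ := (n.choose (k + 2) : ℤ) with hc_def
  set e : ℤ := (n.choose (k + 3) : ℤ) with he_def
  have ha : 0 ≤ a := Int.natCast_nonneg _
  have E1 : b * ((k : ℤ) + 1) = a * ((n : ℤ) - k) := by
    have h := Nat.choose_succ_right_eq n k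
    have : ((n.choose (k + 1) * (k + 1) : ℕ) : ℤ) = ((n.choose k * (n - k) : ℕ) : ℤ) := by
      exact_mod_cast congrArg (Nat.cast : ℕ → ℤ) h
    push_cast [Nat.cast_sub hkn] at this
    linarith
  have E2 : c * ((k : ℤ) + 2) = b * ((n : ℤ) - k - 1) := by
    have h := Nat.choose_succ_right_eq n (k + 1)
    have : ((n.choose (k + 2) * (k + 2) : ℕ) : ℤ) = ((n.choose (k + 1) * (n - (k + 1)) : ℕ) : ℤ) := by
      exact_mod_cast congrArg (Nat.cast : ℕ → ℤ) h
    push_cast [Nat.cast_sub (by omega : k + 1 ≤ n)] at this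
    linarith
  have E3 : e * ((k : ℤ) + 3) = c * ((n : ℤ) - k - 2) := by
    have h := Nat.choose_succ_right_eq n (k + 2)
    have : ((n.choose (k + 3) * (k + 3) : ℕ) : ℤ) = ((n.choose (k + 2) * (n - (k + 2)) : ℕ) : ℤ) := by
      exact_mod_cast congrArg (Nat.cast : ℕ → ℤ) h
    push_cast [Nat.cast_sub (by omega : k + 2 ≤ n)] at this
    linarith
  have hC : c * ((k : ℤ) + 1) * ((k : ℤ) + 2) = a * ((n : ℤ) - k) * ((n : ℤ) - k - 1) := by
    linear_combination ((k : ℤ) + 1) * E2 + ((n : ℤ) - k - 1) * E1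
  have hE : e * ((k : ℤ) + 1) * ((k : ℤ) + 2) * ((k : ℤ) + 3)
      = a * ((n : ℤ) - k) * ((n : ℤ) - k - 1) * ((n : ℤ) - k - 2) := by
    linear_combination ((k : ℤ) + 1) * ((k : ℤ) + 2) * E3 + ((n : ℤ) - k - 2) * hC
  -- the key polynomial inequality
  set m : ℤ := (n : ℤ) - k with hm_def
  have hm : 2 * (k : ℤ) + 6 ≤ m := by
    have : ((3 * k + 6 : ℕ) : ℤ) ≤ (n : ℤ) := by exact_mod_cast hn'
    push_cast at this
    omega
  have hk0 : (0 : ℤ) ≤ (k : ℤ) := Int.natCast_nonneg _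
  have hP : 0 ≤ m * (m - 1) * (m - 2) + ((k : ℤ) + 1) * ((k : ℤ) + 2) * ((k : ℤ) + 3)
      - m * ((k : ℤ) + 2) * ((k : ℤ) + 3) - m * (m - 1) * ((k : ℤ) + 3) := by
    set K : ℤ := (k : ℤ)
    set t : ℤ := m - (2 * K + 6) with ht_def
    have ht : 0 ≤ t := by omega
    have hm' : m = 2 * K + 6 + t := by omega
    rw [hm']
    nlinarith [mul_nonneg ht ht, mul_nonneg (mul_nonneg ht ht) ht, mul_nonneg hk0 ht,
      mul_nonneg (mul_nonneg hk0 hk0) ht, mul_nonneg (mul_nonneg hk0 ht) ht,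
      mul_nonneg (mul_nonneg hk0 hk0) hk0, mul_nonneg hk0 hk0]
  have key : 0 ≤ (e + a - b - c) * (((k : ℤ) + 1) * ((k : ℤ) + 2) * ((k : ℤ) + 3)) := by
    have expand : (e + a - b - c) * (((k : ℤ) + 1) * ((k : ℤ) + 2) * ((k : ℤ) + 3))
        = a * (m * (m - 1) * (m - 2) + ((k : ℤ) + 1) * ((k : ℤ) + 2) * ((k : ℤ) + 3)
          - m * ((k : ℤ) + 2) * ((k : ℤ) + 3) - m * (m - 1) * ((k : ℤ) + 3)) := by
      linear_combination hE - ((k : ℤ) + 2) * ((k : ℤ) + 3) * E1 - ((k : ℤ) + 3) * hC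
    rw [expand]
    exact mul_nonneg ha hP
  have hpos : (0 : ℤ) < ((k : ℤ) + 1) * ((k : ℤ) + 2) * ((k : ℤ) + 3) := by positivity
  nlinarith [key, hpos]
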